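/- The model graph G is a connected graph. -/

import Mathlib

/-- Adjacency relation of the Farey graph on `Option ℚ`: `some x` and `some y` are
adjacent iff `|x.num * y.den - y.num * x.den| = 1`, and `none` (representing `∞`)
is adjacent to `some x` iff `x.den = 1`. -/
def fareyAdj : Option ℚ → Option ℚ → Prop
  | some x, some y => |x.num * (y.den : ℤ) - y.num * (x.den : ℤ)| = 1
  | some x, none => x.den = 1
  | none, some x => x.den = 1
  | none, none => False

/-- The Farey graph `𝔽` on the vertex set `Option ℚ`. -/
def fareyGraph : SimpleGraph (Option ℚ) where
  Adj := fareyAdj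
  symm := by
    constructor
    rintro (_ | x) (_ | y) h
    · exact h.elim
    · exact h
    · exact h
    · show |y.num * (x.den : ℤ) - x.num * (y.den : ℤ)| = 1
      rw [abs_sub_comm]
      exact h
  loopless := by
    constructor
    rintro (_ | x) h
    · exact h.elim
    · have : |x.num * (x.den : ℤ) - x.num * (x.den : ℤ)| = 1 := h
      simp at this

/-- A triangle of the Farey graph: a 3-element clique. -/
def FareyTriangle : Type := {s : Finset (Option ℚ) // fareyGraph.IsNClique 3 s}

/-- The Farey dual graph `𝔽*`: vertices are the triangles of the Farey graph, two
triangles being adjacent iff they are distinct and share exactly two vertices. -/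
def fareyDual : SimpleGraph FareyTriangle where
  Adj T T' := T ≠ T' ∧ (T.1 ∩ T'.1).card = 2
  symm := by
    constructor
    rintro T T' ⟨h1, h2⟩
    exact ⟨h1.symm, by rwa [Finset.inter_comm]⟩
  loopless := ⟨fun T h => h.1 rfl⟩

/-- Vertices of the model graph: Farey vertices `.inl x`, dual vertices
`.inr (.inl x)` (written `x̃`), and triangle-vertices `.inr (.inr T)`. -/
abbrev ModelVertex : Type := Option ℚ ⊕ (Option ℚ ⊕ FareyTriangle)

/-- Adjacency relation of the model graph `G`. -/
def modelAdj : ModelVertex → ModelVertex → Prop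
  | .inl x, .inl y => fareyGraph.Adj x y
  | .inl x, .inr (.inl y) => x = y
  | .inr (.inl x), .inl y => x = y
  | .inr (.inl x), .inr (.inr T) => x ∈ T.1
  | .inr (.inr T), .inr (.inl x) => x ∈ T.1
  | .inr (.inr T), .inr (.inr T') => T ≠ T' ∧ (T.1 ∩ T'.1).card = 2
  | _, _ => False

/-- The model graph `G` of the pants graph of `N₃`: on `V(𝔽) ⊔ V(𝔽) ⊔ T(𝔽)`, with
edges `x—y` for `x, y` adjacent in `𝔽`, `x̃—x`, `x̃—T` whenever `x ∈ T`, and `T—T'`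
whenever `T ≠ T'` and `|T ∩ T'| = 2`. -/
def modelGraph : SimpleGraph ModelVertex where
  Adj := modelAdj
  symm := by
    constructor
    rintro (x | x | T) (y | y | T') h
    · exact fareyGraph.symm.symm _ _ h
    · exact h.symm
    · exact h.elim
    · exact h.symm
    · exact h.elim
    · exact h
    · exact h.elim
    · exact h
    · exact ⟨h.1.symm, by
        have := h.2
        rwa [Finset.inter_comm]⟩
  loopless := by
    constructor
    rintro (x | x | T) h
    · exact fareyGraph.loopless.irrefl x h
    · exact h.elim
    · exact h.1 rfl


lemma farey_reach : ∀ (x : ℚ), fareyGraph.Reachable (some x) none := by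
  suffices H : ∀ n (x : ℚ), x.den = n → fareyGraph.Reachable (some x) none by
    exact fun x => H x.den x rfl
  intro n
  induction n using Nat.strong_induction_on with
  | _ n ih =>
    intro x hx
    rcases eq_or_lt_of_le (Nat.one_le_iff_ne_zero.mpr x.den_nz) with h1 | h1
    · exact SimpleGraph.Adj.reachable (show x.den = 1 from h1.symm)
    · -- x.den ≥ 2
      set q : ℤ := (x.den : ℤ) with hq
      have hq2 : (2 : ℤ) ≤ q := by rw [hq]; omega
      have hqpos : (0 : ℤ) < q := by omega
      have hcop : Int.gcd x.num x.den = 1 := x.reduced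
      have hic : IsCoprime x.num q := Int.isCoprime_iff_gcd_eq_one.mpr hcop
      obtain ⟨u, v, huv⟩ := hic
      set a : ℤ := u % q with ha
      have ha0 : 0 ≤ a := Int.emod_nonneg u (by omega)
      have haq : a < q := Int.emod_lt_of_pos u hqpos
      have hdvd : q ∣ x.num * a - 1 := by
        have hu : u = q * (u / q) + a := (Int.mul_ediv_add_emod u q).symm
        have : x.num * a - 1 = q * (-(v) - x.num * (u / q)) := by
          linear_combination (-x.num) * hu + huv
        exact ⟨_, this⟩
      have hane : a ≠ 0 := by
        intro h0
        rw [h0] at hdvd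
        have h1d : q ∣ (1 : ℤ) := by simpa using hdvd.neg_right
        have := Int.le_of_dvd one_pos h1d
        omega
      have hapos : 0 < a := lt_of_le_of_ne ha0 (Ne.symm hane)
      obtain ⟨p', hp'⟩ := hdvd
      have key : x.num * a - p' * q = 1 := by
        have : x.num * a - 1 = q * p' := hp'
        linarith [this]
      set q' : ℕ := a.toNat with hq'
      have hq'a : (q' : ℤ) = a := Int.toNat_of_nonneg ha0
      have hq'pos : 0 < q' := by omega
      have hq'lt : q' < n := by
        have hlt' : (q' : ℤ) < (x.den : ℤ) := by rw [hq'a]; exact haq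
        exact hx ▸ Nat.cast_lt.mp hlt' 
      have hcop' : p'.natAbs.Coprime q' := by
        have : IsCoprime p' a := by
          refine ⟨-q, x.num, ?_⟩
          linarith [key]
        have hg : Int.gcd p' a = 1 := Int.isCoprime_iff_gcd_eq_one.mp this
        have : p'.natAbs.gcd a.natAbs = 1 := hg
        rwa [show a.natAbs = q' by omega] at this
      set y : ℚ := ⟨p', q', by omega, hcop'⟩ with hy
      have hadj : fareyGraph.Adj (some x) (some y) := by
        show |x.num * (y.den : ℤ) - y.num * (x.den : ℤ)| = 1
        have hyd : (y.den : ℤ) = a := hq'a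
        have hyn : y.num = p' := rfl
        rw [hyd, hyn, ← hq, key]
        simp
      exact hadj.reachable.trans (ih q' hq'lt y rfl)

def fareyToModel : fareyGraph →g modelGraph := ⟨Sum.inl, fun h => h⟩

lemma model_reach_inl (x : Option ℚ) :
    modelGraph.Reachable (.inl x) (.inl none) := by
  cases x with
  | none => exact SimpleGraph.Reachable.refl _
  | some r => exact (farey_reach r).map fareyToModel

/-- The model graph `G` is connected. -/
theorem modelGraph_connected : modelGraph.Connected := by
  rw [SimpleGraph.connected_iff_exists_forall_reachable]
  refine ⟨.inl none, fun v => ?_⟩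
  match v with
  | .inl x => exact (model_reach_inl x).symm
  | .inr (.inl x) =>
    have h2 : modelGraph.Adj (.inr (.inl x)) (.inl x) := rfl
    exact (h2.reachable.trans (model_reach_inl x)).symm
  | .inr (.inr T) =>
    have h3 : T.1.card = 3 := T.2.2
    obtain ⟨x, hx⟩ : T.1.Nonempty := by rw [← Finset.card_pos, h3]; omega
    have h1 : modelGraph.Adj (.inr (.inr T)) (.inr (.inl x)) := hx
    have h2 : modelGraph.Adj (.inr (.inl x)) (.inl x) := rfl
    exact ((h1.reachable.trans h2.reachable).trans (model_reach_inl x)).symm
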